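/- For any two directed graphs G' and G'' on the same vertex set, each having exactly one root component, there is a finite sequence of graphs G' = G_0, G_1, ..., G_m = G'' such that each G_i has exactly one root component and consecutive graphs differ in at most one edge. Moreover, if the root components of G' and G'' have the same vertex set R, then the construction can be done so that every intermediate graph has root component with vertex set R. -/

import Mathlib

/-- A root component of a directed graph `G`: a strongly connected component
(maximal set of mutually reachable vertices) with no incoming edges from outside. -/
def IsRootComponent {V : Type*} (G : V → V → Prop) (R : Set V) : Prop :=
  R.Nonempty ∧ (∀ p ∈ R, ∀ q ∈ R, Relation.ReflTransGen G p q) ∧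
    ∀ p ∈ R, ∀ q, G q p → q ∈ R

/-- A causal influence chain of length `k` from `p` (starting in round `r`) to `q`. -/
def InflChain {V : Type*} (G : ℕ → V → V → Prop) (r : ℕ) (p q : V) (k : ℕ) : Prop :=
  ∃ f : ℕ → V, f 0 = p ∧ f k = q ∧ ∀ i < k, f i = f (i + 1) ∨ G (r + i) (f i) (f (i + 1))

/-- The dynamic causal distance `cd_r(p,q)`: length of the shortest causal influence
chain from `p` starting in round `r` to `q` (`⊤` if none exists, `1` for `p = q`). -/
noncomputable def cd {V : Type*} (G : ℕ → V → V → Prop) (r : ℕ) (p q : V) : ℕ∞ :=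
  sInf {k : ℕ∞ | ∃ m : ℕ, k = (m : ℕ∞) ∧ 1 ≤ m ∧ InflChain G r p q m}

/-- Two graphs differ in at most one edge. -/
def DiffAtMostOneEdge {V : Type*} (G G' : V → V → Prop) : Prop :=
  ∃ a b : V, ∀ x y : V, ¬ (x = a ∧ y = b) → (G x y ↔ G' x y)

section Aux
variable {V : Type*}

lemma mem_root_of_rtg {G : V → V → Prop} {R : Set V}
    (hR : IsRootComponent G R) {x y : V} (h : Relation.ReflTransGen G x y) :
    y ∈ R → x ∈ R := by
  induction h with
  | refl => exact id
  | tail hxb hbc ih => exact fun hc => ih (hR.2.2 _ hc _ hbc)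

lemma unique_of_reach {G : V → V → Prop} {R : Set V}
    (hR : IsRootComponent G R)
    (hreach : ∀ v, ∃ p ∈ R, Relation.ReflTransGen G p v) :
    ∃! R' : Set V, IsRootComponent G R' := by
  refine ⟨R, hR, ?_⟩
  intro R2 hR2
  obtain ⟨q, hq⟩ := hR2.1
  obtain ⟨p, hpR, hpq⟩ := hreach q
  have hpR2 : p ∈ R2 := mem_root_of_rtg hR2 hpq hq
  ext x
  constructor
  · intro hx; exact mem_root_of_rtg hR (hR2.2.1 x hx p hpR2) hpR
  · intro hx; exact mem_root_of_rtg hR2 (hR.2.1 x hx p hpR) hpR2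

lemma exists_root_reaching [Fintype V] (G : V → V → Prop) (v : V) :
    ∃ R : Set V, IsRootComponent G R ∧ ∃ p ∈ R, Relation.ReflTransGen G p v := by
  classical
  let A : V → Finset V := fun u => Finset.univ.filter (fun x => Relation.ReflTransGen G x u)
  obtain ⟨u, hu, hmin⟩ := Finset.exists_min_image
    (Finset.univ.filter (fun u => Relation.ReflTransGen G u v)) (fun u => (A u).card)
    ⟨v, by simpa using Relation.ReflTransGen.refl⟩
  simp only [Finset.mem_filter, Finset.mem_univ, true_and] at hu
  have key : ∀ x, Relation.ReflTransGen G x u → Relation.ReflTransGen G u x := by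
    intro x hx
    have hsub : A x ⊆ A u := by
      intro y hy
      simp only [A, Finset.mem_filter, Finset.mem_univ, true_and] at hy ⊢
      exact hy.trans hx
    have hle : (A u).card ≤ (A x).card := by
      refine hmin x ?_
      simp only [Finset.mem_filter, Finset.mem_univ, true_and]
      exact hx.trans hu
    have hEq : A x = A u := Finset.eq_of_subset_of_card_le hsub hle
    have : u ∈ A x := by rw [hEq]; simpa [A] using Relation.ReflTransGen.refl
    simpa [A] using this
  refine ⟨{x | Relation.ReflTransGen G x u}, ⟨⟨u, Relation.ReflTransGen.refl⟩, ?_, ?_⟩,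
    ⟨u, Relation.ReflTransGen.refl, hu⟩⟩
  · intro p hp q hq
    exact Relation.ReflTransGen.trans hp (key q hq)
  · intro p hp q hq
    exact Relation.ReflTransGen.trans (Relation.ReflTransGen.single hq) hp

lemma reach_of_unique [Fintype V] {G : V → V → Prop} {R : Set V}
    (h1 : ∃! R' : Set V, IsRootComponent G R') (hR : IsRootComponent G R) :
    ∀ v, ∃ p ∈ R, Relation.ReflTransGen G p v := by
  intro v
  obtain ⟨R2, hR2, hp⟩ := exists_root_reaching G v
  obtain ⟨R1, _, h1b⟩ := h1
  have : R2 = R := (h1b R2 hR2).trans (h1b R hR).symm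
  rwa [this] at hp

end Aux

/-- A chain of graphs from `A` to `B`, changing one edge at a time, all satisfying `P`. -/
def EChain {V : Type*} (P : (V → V → Prop) → Prop) (A B : V → V → Prop) : Prop :=
  ∃ (m : ℕ) (F : ℕ → V → V → Prop), F 0 = A ∧ F m = B ∧
    (∀ i ≤ m, P (F i)) ∧ ∀ i < m, DiffAtMostOneEdge (F i) (F (i + 1))

section Chain
variable {V : Type*} {P Q : (V → V → Prop) → Prop} {A B C : V → V → Prop}

lemma echain_refl (h : P A) : EChain P A A :=
  ⟨0, fun _ => A, rfl, rfl, fun _ _ => h, fun i hi => absurd hi (Nat.not_lt_zero i)⟩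

lemma echain_trans (h1 : EChain P A B) (h2 : EChain P B C) : EChain P A C := by
  obtain ⟨m1, F1, e1, e2, p1, d1⟩ := h1
  obtain ⟨m2, F2, f1, f2, p2, d2⟩ := h2
  refine ⟨m1 + m2, fun i => if i < m1 then F1 i else F2 (i - m1), ?_, ?_, ?_, ?_⟩
  · by_cases h : 0 < m1
    · simp only [h, if_true, e1]
    · have hm : m1 = 0 := by omega
      simp only [h, if_false]
      rw [Nat.zero_sub, f1, ← e2, hm, e1]
  · have h : ¬ m1 + m2 < m1 := by omega
    simp only [h, if_false, Nat.add_sub_cancel_left, f2]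
  · intro i hi
    by_cases h : i < m1
    · simp only [h, if_true]; exact p1 i (le_of_lt h)
    · simp only [h, if_false]; exact p2 (i - m1) (by omega)
  · intro i hi
    by_cases h : i < m1
    · show DiffAtMostOneEdge (if i < m1 then F1 i else F2 (i - m1))
        (if i + 1 < m1 then F1 (i + 1) else F2 (i + 1 - m1))
      by_cases h' : i + 1 < m1
      · rw [if_pos h, if_pos h']; exact d1 i h
      · have hi1 : i + 1 = m1 := by omega
        rw [if_pos h, if_neg h', show i + 1 - m1 = 0 by omega, f1, ← e2, ← hi1]
        exact d1 i h
    · have h' : ¬ i + 1 < m1 := by omega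
      show DiffAtMostOneEdge (if i < m1 then F1 i else F2 (i - m1))
        (if i + 1 < m1 then F1 (i + 1) else F2 (i + 1 - m1))
      rw [if_neg h, if_neg h', show i + 1 - m1 = (i - m1) + 1 by omega]
      exact d2 (i - m1) (by omega)

lemma diff_symm {G G' : V → V → Prop} (h : DiffAtMostOneEdge G G') :
    DiffAtMostOneEdge G' G := by
  obtain ⟨a, b, h⟩ := h
  exact ⟨a, b, fun x y hxy => (h x y hxy).symm⟩

lemma echain_symm (h : EChain P A B) : EChain P B A := by
  obtain ⟨m, F, e1, e2, p, d⟩ := h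
  refine ⟨m, fun i => F (m - i), by simp [e2], by simp [e1], fun i hi => p (m - i) (by omega), ?_⟩
  intro i hi
  show DiffAtMostOneEdge (F (m - i)) (F (m - (i + 1)))
  have h1 : m - i = (m - (i + 1)) + 1 := by omega
  rw [h1]
  exact diff_symm (d (m - (i + 1)) (by omega))

lemma echain_mono (h : EChain P A B) (hPQ : ∀ H, P H → Q H) : EChain Q A B := by
  obtain ⟨m, F, e1, e2, p, d⟩ := h
  exact ⟨m, F, e1, e2, fun i hi => hPQ _ (p i hi), d⟩

lemma echain_le [Fintype V] :
    ∀ (A B : V → V → Prop), (∀ x y, A x y → B x y) →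
    (∀ H : V → V → Prop, (∀ x y, A x y → H x y) → (∀ x y, H x y → B x y) → P H) →
    EChain P A B := by
  classical
  intro A B
  let D : (V → V → Prop) → Finset (V × V) := fun A =>
    Finset.univ.filter (fun p : V × V => B p.1 p.2 ∧ ¬ A p.1 p.2)
  suffices h : ∀ n (A : V → V → Prop), (D A).card = n →
      (∀ x y, A x y → B x y) →
      (∀ H : V → V → Prop, (∀ x y, A x y → H x y) → (∀ x y, H x y → B x y) → P H) →
      EChain P A B by
    exact h _ A rfl
  intro n
  induction n with
  | zero =>
    intro A hcard hAB hP
    have hempty : D A = ∅ := Finset.card_eq_zero.mp hcard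
    have hBA : ∀ x y, B x y → A x y := by
      intro x y hB
      by_contra hA
      have hmem : (x, y) ∈ D A := by
        simp only [D, Finset.mem_filter, Finset.mem_univ, true_and]
        exact ⟨hB, hA⟩
      rw [hempty] at hmem
      exact absurd hmem (Finset.notMem_empty _)
    have hE : A = B := by
      funext x y; exact propext ⟨hAB x y, hBA x y⟩
    rw [hE]
    exact echain_refl (hP B (hE ▸ hAB) (fun _ _ h => h))
  | succ n ih =>
    intro A hcard hAB hP
    have hne : (D A).Nonempty := by
      rw [← Finset.card_pos, hcard]; omega
    obtain ⟨⟨a, b⟩, hab⟩ := hne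
    simp only [D, Finset.mem_filter, Finset.mem_univ, true_and] at hab
    set A' : V → V → Prop := fun x y => A x y ∨ (x = a ∧ y = b) with hA'
    have hAA' : ∀ x y, A x y → A' x y := fun x y h => Or.inl h
    have hA'B : ∀ x y, A' x y → B x y := by
      rintro x y (h | ⟨rfl, rfl⟩)
      · exact hAB x y h
      · exact hab.1
    have hcard' : (D A').card = n := by
      have hset : D A' = (D A).erase (a, b) := by
        ext ⟨x, y⟩
        simp only [D, Finset.mem_filter, Finset.mem_univ, true_and, Finset.mem_erase, hA']
        constructor
        · rintro ⟨hB, hA⟩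
          push_neg at hA
          refine ⟨?_, hB, hA.1⟩
          intro he
          rw [Prod.mk.injEq] at he
          exact hA.2 he.1 he.2
        · rintro ⟨hne, hB, hA⟩
          refine ⟨hB, ?_⟩
          push_neg
          refine ⟨hA, ?_⟩
          rintro rfl rfl
          exact hne rfl
      have hmem : (a, b) ∈ D A := by
        simp only [D, Finset.mem_filter, Finset.mem_univ, true_and]
        exact hab
      rw [hset, Finset.card_erase_of_mem hmem, hcard]
      omega
    have step : EChain P A A' := by
      refine ⟨1, fun i => if i = 0 then A else A', by simp, by simp, ?_, ?_⟩
      · intro i hi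
        by_cases h : i = 0
        · simp only [h, if_true]
          exact hP A (fun _ _ h => h) hAB
        · simp only [h, if_false]
          exact hP A' hAA' hA'B
      · intro i hi
        have hz : i = 0 := by omega
        subst hz
        show DiffAtMostOneEdge (if 0 = 0 then A else A') (if (0:ℕ) + 1 = 0 then A else A')
        rw [if_pos rfl, if_neg (by omega)]
        refine ⟨a, b, fun x y hxy => ?_⟩
        simp only [hA']
        constructor
        · exact Or.inl
        · rintro (h | ⟨rfl, rfl⟩)
          · exact h
          · exact absurd ⟨rfl, rfl⟩ hxy
    have rest : EChain P A' B :=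
      ih A' hcard' hA'B (fun H h1 h2 => hP H (fun x y h => h1 x y (hAA' x y h)) h2)
    exact echain_trans step rest

end Chain

section Graphs
variable {V : Type*}

/-- Star graph centered at `v`: edges from `v` to every other vertex. -/
def StarG (v : V) : V → V → Prop := fun x y => x = v ∧ y ≠ v

/-- Canonical graph with root component `R`, centered at `r0 ∈ R`. -/
def CanG (R : Set V) (r0 : V) : V → V → Prop :=
  fun x y => (x = r0 ∧ y ≠ r0) ∨ (x ∈ R ∧ x ≠ r0 ∧ y = r0)

lemma starG_le_canG (R : Set V) (r0 : V) :
    ∀ x y, StarG r0 x y → CanG R r0 x y := fun _ _ h => Or.inl h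

lemma canG_irrefl (R : Set V) (r0 : V) : Irreflexive (CanG R r0) := by
  rintro x (⟨rfl, h⟩ | ⟨_, h, rfl⟩) <;> exact h rfl

lemma star_root {v : V} {H : V → V → Prop} (h : ∀ x y, StarG v x y → H x y) :
    IsRootComponent H {x | Relation.ReflTransGen H x v} ∧
    ∀ u, ∃ p ∈ {x | Relation.ReflTransGen H x v}, Relation.ReflTransGen H p u := by
  have hreachv : ∀ u, Relation.ReflTransGen H v u := by
    intro u
    by_cases hu : u = v
    · subst hu; exact .refl
    · exact .single (h v u ⟨rfl, hu⟩)
  refine ⟨⟨⟨v, .refl⟩, ?_, ?_⟩, fun u => ⟨v, .refl, hreachv u⟩⟩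
  · intro p hp q _
    exact Relation.ReflTransGen.trans hp (hreachv q)
  · intro p hp q hq
    exact Relation.ReflTransGen.trans (.single hq) hp

lemma sandwich_root {G : V → V → Prop} {R : Set V} {r0 : V} (hr0 : r0 ∈ R)
    (hroot : IsRootComponent G R)
    (hreach : ∀ v, ∃ p ∈ R, Relation.ReflTransGen G p v)
    {H : V → V → Prop}
    (hlow : (∀ x y, G x y → H x y) ∨ (∀ x y, CanG R r0 x y → H x y))
    (hup : ∀ x y, H x y → G x y ∨ CanG R r0 x y) :
    IsRootComponent H R ∧ ∀ v, ∃ p ∈ R, Relation.ReflTransGen H p v := by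
  have hmut : ∀ p ∈ R, ∀ q ∈ R, Relation.ReflTransGen H p q := by
    rcases hlow with hl | hl
    · intro p hp q hq
      exact Relation.ReflTransGen.mono (fun a b => hl a b) _ _ (hroot.2.1 p hp q hq)
    · intro p hp q hq
      have h1 : Relation.ReflTransGen H p r0 := by
        by_cases hpr : p = r0
        · subst hpr; exact .refl
        · exact .single (hl p r0 (Or.inr ⟨hp, hpr, rfl⟩))
      have h2 : Relation.ReflTransGen H r0 q := by
        by_cases hqr : q = r0
        · subst hqr; exact .refl
        · exact .single (hl r0 q (Or.inl ⟨rfl, hqr⟩))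
      exact h1.trans h2
  have hreachH : ∀ v, ∃ p ∈ R, Relation.ReflTransGen H p v := by
    rcases hlow with hl | hl
    · intro v
      obtain ⟨p, hp, hpv⟩ := hreach v
      exact ⟨p, hp, Relation.ReflTransGen.mono (fun a b => hl a b) _ _ hpv⟩
    · intro v
      refine ⟨r0, hr0, ?_⟩
      by_cases hv : v = r0
      · subst hv; exact .refl
      · exact .single (hl r0 v (Or.inl ⟨rfl, hv⟩))
  refine ⟨⟨⟨r0, hr0⟩, hmut, ?_⟩, hreachH⟩
  intro p hp q hq
  rcases hup q p hq with h | (⟨rfl, _⟩ | ⟨hq', _, _⟩)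
  · exact hroot.2.2 p hp q h
  · exact hr0
  · exact hq'

/-- A chain from `G` to its canonical graph, keeping root component `R` throughout. -/
lemma half2 [Fintype V] {G : V → V → Prop} {R : Set V} {r0 : V} (hr0 : r0 ∈ R)
    (hG : Irreflexive G) (hroot : IsRootComponent G R)
    (hreach : ∀ v, ∃ p ∈ R, Relation.ReflTransGen G p v) :
    EChain (fun H => Irreflexive H ∧ IsRootComponent H R ∧
      ∃! R' : Set V, IsRootComponent H R') G (CanG R r0) := by
  set P : (V → V → Prop) → Prop := fun H => Irreflexive H ∧ IsRootComponent H R ∧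
      ∃! R' : Set V, IsRootComponent H R' with hP
  set U : V → V → Prop := fun x y => G x y ∨ CanG R r0 x y with hU
  have hIrrH : ∀ H : V → V → Prop, (∀ x y, H x y → U x y) → Irreflexive H := by
    intro H hup x hx
    rcases hup x x hx with h | h
    · exact hG x h
    · exact canG_irrefl R r0 x h
  have c1 : EChain P G U := by
    refine echain_le G U (fun x y h => Or.inl h) (fun H h1 h2 => ?_)
    have hs := sandwich_root hr0 hroot hreach (Or.inl h1) h2
    exact ⟨hIrrH H h2, hs.1, unique_of_reach hs.1 hs.2⟩
  have c2 : EChain P (CanG R r0) U := by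
    refine echain_le _ U (fun x y h => Or.inr h) (fun H h1 h2 => ?_)
    have hs := sandwich_root hr0 hroot hreach (Or.inr h1) h2
    exact ⟨hIrrH H h2, hs.1, unique_of_reach hs.1 hs.2⟩
  exact echain_trans c1 (echain_symm c2)

/-- A chain from `G` to the star graph on `r0`, keeping a unique root component. -/
lemma half1 [Fintype V] {G : V → V → Prop} {R : Set V} {r0 : V} (hr0 : r0 ∈ R)
    (hG : Irreflexive G) (h1 : ∃! R' : Set V, IsRootComponent G R')
    (hroot : IsRootComponent G R) :
    EChain (fun H => Irreflexive H ∧ ∃! R' : Set V, IsRootComponent H R') G (StarG r0) := by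
  set P : (V → V → Prop) → Prop := fun H => Irreflexive H ∧
      ∃! R' : Set V, IsRootComponent H R' with hPdef
  have c0 : EChain P G (CanG R r0) :=
    echain_mono (half2 hr0 hG hroot (reach_of_unique h1 hroot))
      (fun H h => ⟨h.1, h.2.2⟩)
  have c3 : EChain P (StarG r0) (CanG R r0) := by
    refine echain_le _ _ (starG_le_canG R r0) (fun H hl hu => ?_)
    have hs := star_root hl
    have hirr : Irreflexive H := fun x hx => canG_irrefl R r0 x (hu x x hx)
    exact ⟨hirr, unique_of_reach hs.1 hs.2⟩
  exact echain_trans c0 (echain_symm c3)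

/-- A chain between two star graphs, keeping a unique root component. -/
lemma star_bridge [Fintype V] (v w : V) :
    EChain (fun H => Irreflexive H ∧ ∃! R' : Set V, IsRootComponent H R')
      (StarG v) (StarG w) := by
  set P : (V → V → Prop) → Prop := fun H => Irreflexive H ∧
      ∃! R' : Set V, IsRootComponent H R' with hPdef
  set U : V → V → Prop := fun x y => StarG v x y ∨ StarG w x y with hU
  have hIrrH : ∀ H : V → V → Prop, (∀ x y, H x y → U x y) → Irreflexive H := by
    intro H hup x hx
    rcases hup x x hx with ⟨rfl, h⟩ | ⟨rfl, h⟩ <;> exact h rfl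
  have c1 : EChain P (StarG v) U := by
    refine echain_le _ U (fun x y h => Or.inl h) (fun H h1 h2 => ?_)
    have hs := star_root h1
    exact ⟨hIrrH H h2, unique_of_reach hs.1 hs.2⟩
  have c2 : EChain P (StarG w) U := by
    refine echain_le _ U (fun x y h => Or.inr h) (fun H h1 h2 => ?_)
    have hs := star_root h1
    exact ⟨hIrrH H h2, unique_of_reach hs.1 hs.2⟩
  exact echain_trans c1 (echain_symm c2)

end Graphs

theorem stmt_10 {V : Type*} [Fintype V] (G G' : V → V → Prop)
    (hG : Irreflexive G) (hG' : Irreflexive G')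
    (h1 : ∃! R : Set V, IsRootComponent G R)
    (h1' : ∃! R : Set V, IsRootComponent G' R) :
    (∃ (m : ℕ) (F : ℕ → V → V → Prop), F 0 = G ∧ F m = G' ∧
      (∀ i ≤ m, Irreflexive (F i) ∧ ∃! R : Set V, IsRootComponent (F i) R) ∧
      ∀ i < m, DiffAtMostOneEdge (F i) (F (i + 1))) ∧
    (∀ R : Set V, IsRootComponent G R → IsRootComponent G' R →
      ∃ (m : ℕ) (F : ℕ → V → V → Prop), F 0 = G ∧ F m = G' ∧
        (∀ i ≤ m, Irreflexive (F i) ∧ IsRootComponent (F i) R ∧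
          ∃! R' : Set V, IsRootComponent (F i) R') ∧
        ∀ i < m, DiffAtMostOneEdge (F i) (F (i + 1))) := by
  constructor
  · obtain ⟨R, hRroot⟩ := h1.exists
    obtain ⟨R', hR'root⟩ := h1'.exists
    obtain ⟨r0, hr0⟩ := hRroot.1
    obtain ⟨r0', hr0'⟩ := hR'root.1
    have chain := echain_trans (half1 hr0 hG h1 hRroot)
      (echain_trans (star_bridge r0 r0') (echain_symm (half1 hr0' hG' h1' hR'root)))
    obtain ⟨m, F, e1, e2, p, d⟩ := chain
    exact ⟨m, F, e1, e2, p, d⟩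
  · intro R hGR hG'R
    obtain ⟨r0, hr0⟩ := hGR.1
    have chain := echain_trans (half2 hr0 hG hGR (reach_of_unique h1 hGR))
      (echain_symm (half2 hr0 hG' hG'R (reach_of_unique h1' hG'R)))
    obtain ⟨m, F, e1, e2, p, d⟩ := chain
    exact ⟨m, F, e1, e2, p, d⟩
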